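/- arXiv:2011.07536 — 2 statements merged into one kernel-verified Lean document; each statement's English description precedes it below -/
import Mathlib

section
/- Let H be a division ring of finite dimension as a module over its center. Let L and F be division rings with injective ring homomorphisms H → L → F, and suppose that both L/H and F/H are Galois extensions (in the sense of Artin) with finite Galois groups. Then the restriction map Gal(F/H) → Gal(L/H) is well-defined: every ring automorphism of F fixing (the image of) H pointwise maps (the image of) L bijectively onto itself, and hence induces an automorphism of L fixing H pointwise. -/
/-- The group of ring automorphisms of `M` fixing the image of `ι : H →+* M` pointwise. -/
def RingHom.fixingSubgroup {H M : Type*} [Semiring H] [Semiring M] (ι : H →+* M) :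
    Subgroup (RingAut M) where
  carrier := {f | ∀ x : H, f (ι x) = ι x}
  one_mem' := fun _ => rfl
  mul_mem' := fun {a b} ha hb x => by
    simp only [Set.mem_setOf_eq] at ha hb ⊢
    show a (b (ι x)) = ι x
    rw [hb, ha]
  inv_mem' := fun {a} ha x => by
    simp only [Set.mem_setOf_eq] at ha ⊢
    show a.symm (ι x) = ι x
    rw [← ha x, RingEquiv.symm_apply_apply, ha]

/-- `M` is a Galois extension of `H` (along `ι`) in the sense of Artin: every element of `M`
fixed by all ring automorphisms of `M` fixing `ι(H)` pointwise lies in `ι(H)`. -/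
def RingHom.IsArtinGalois {H M : Type*} [Semiring H] [Semiring M] (ι : H →+* M) : Prop :=
  ∀ m : M, (∀ f : RingAut M, (∀ x : H, f (ι x) = ι x) → f m = m) → ∃ x : H, ι x = m


/-- Conjugation by a nonzero element of a division ring, as a ring automorphism. -/
def conjAut {F : Type*} [DivisionRing F] (u : F) (hu : u ≠ 0) : RingAut F where
  toFun x := u * x * u⁻¹
  invFun x := u⁻¹ * x * u
  left_inv x := by simp [mul_assoc, inv_mul_cancel_left₀ hu, inv_mul_cancel₀ hu]
  right_inv x := by simp [mul_assoc, mul_inv_cancel_left₀ hu, mul_inv_cancel₀ hu]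
  map_add' x y := by noncomm_ring
  map_mul' x y := by simp [mul_assoc, inv_mul_cancel_left₀ hu]

@[simp] lemma conjAut_apply {F : Type*} [DivisionRing F] (u : F) (hu : u ≠ 0) (x : F) :
    conjAut u hu x = u * x * u⁻¹ := rfl

/-- **Lemma K**: right multiplications by center-linearly-independent elements of a
division ring are left-linearly independent. -/
lemma lemK {D : Type*} [DivisionRing D] {ι : Type*} [DecidableEq ι] {d : ι → D}
    (hd : LinearIndependent (Subring.center D) d) :
    ∀ (s : Finset ι) (a : ι → D), (∀ h : D, ∑ k ∈ s, a k * h * d k = 0) → ∀ k ∈ s, a k = 0 := by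
  intro s
  induction s using Finset.strongInduction with
  | _ s ih =>
    intro a ha k hk
    by_contra hak
    -- normalize so that the coefficient at k is 1
    set b : ι → D := fun i => (a k)⁻¹ * a i with hb
    have hb1 : b k = 1 := inv_mul_cancel₀ hak
    have hbs : ∀ h : D, ∑ i ∈ s, b i * h * d i = 0 := by
      intro h
      calc ∑ i ∈ s, b i * h * d i = (a k)⁻¹ * ∑ i ∈ s, a i * h * d i := by
            rw [Finset.mul_sum]
            exact Finset.sum_congr rfl fun i _ => by rw [hb]; noncomm_ring
        _ = 0 := by rw [ha h, mul_zero]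
    -- commutator trick: each b i is central
    have hbc : ∀ w : D, ∀ i ∈ s, b i * w - w * b i = 0 := by
      intro w
      have key : ∀ h : D, ∑ i ∈ s.erase k, (b i * w - w * b i) * h * d i = 0 := by
        intro h
        have h1 := hbs (w * h)
        have h2 : ∑ i ∈ s, w * (b i * h * d i) = 0 := by
          rw [← Finset.mul_sum, hbs h, mul_zero]
        have h3 : ∑ i ∈ s, (b i * w - w * b i) * h * d i = 0 := by
          have he : ∑ i ∈ s, (b i * w - w * b i) * h * d i
              = (∑ i ∈ s, b i * (w * h) * d i) - ∑ i ∈ s, w * (b i * h * d i) := by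
            rw [← Finset.sum_sub_distrib]
            exact Finset.sum_congr rfl fun i _ => by noncomm_ring
          rw [he, h1, h2, sub_zero]
        rw [← h3]
        refine Finset.sum_erase (f := fun i => (b i * w - w * b i) * h * d i) s ?_
        show (b k * w - w * b k) * h * d k = 0
        rw [hb1, mul_one, one_mul, sub_self, zero_mul, zero_mul]
      have her : ∀ i ∈ s.erase k, b i * w - w * b i = 0 :=
        ih (s.erase k) (Finset.erase_ssubset hk) _ key
      intro i hi
      rcases eq_or_ne i k with rfl | hik
      · rw [hb1, mul_one, one_mul, sub_self]
      · exact her i (Finset.mem_erase.2 ⟨hik, hi⟩)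
    have hcentral : ∀ i ∈ s, b i ∈ Subring.center D := by
      intro i hi
      rw [Subring.mem_center_iff]
      intro w
      exact (sub_eq_zero.mp (hbc w i hi)).symm
    -- now use linear independence over the center
    classical
    let g : ι → Subring.center D := fun i => if h : i ∈ s then ⟨b i, hcentral i h⟩ else 0
    have hg : ∀ i ∈ s, (g i : D) = b i := fun i hi => by simp only [g, dif_pos hi]
    have hzero : ∑ i ∈ s, g i • d i = 0 := by
      have h1 := hbs 1
      simp only [mul_one] at h1
      rw [← h1]
      refine Finset.sum_congr rfl fun i hi => ?_
      have : g i • d i = (g i : D) * d i := rfl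
      rw [this, hg i hi]
    have hgk := linearIndependent_iff'.mp hd s g hzero k hk
    have : b k = 0 := by rw [← hg k hk, hgk]; rfl
    rw [hb1] at this
    exact one_ne_zero this


section LemmaT

variable {D R : Type*} [DivisionRing D] [Ring R]

lemma central_comm {r : Subring.center D} (t : D) : (r : D) * t = t * (r : D) :=
  (Subring.mem_center_iff.mp r.2 t).symm

/-- Transfer: an operator identity on `D` (with witnesses) transfers along `φ` to any
ring `R` in which the image of the center of `D` is central. -/
lemma lemT_transfer [Module.Finite (Subring.center D) D] (φ : D →+* R)
    (hz : ∀ s : D, s ∈ Subring.center D → φ s ∈ Subring.center R)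
    {ι₁ ι₂ : Type} [Fintype ι₁] [Fintype ι₂]
    (a b : ι₁ → D) (a' b' : ι₂ → D)
    (hop : ∀ h : D, ∑ i, a i * h * b i = ∑ i, a' i * h * b' i) (x : R) :
    ∑ i, φ (a i) * x * φ (b i) = ∑ i, φ (a' i) * x * φ (b' i) := by
  set z := Subring.center D
  let e := Module.finBasis z D
  have expand : ∀ {ι : Type} [Fintype ι] (u v : ι → D) (h : D),
      ∑ i, u i * h * v i = ∑ l, (∑ i, ((e.repr (v i)) l : D) * u i) * h * e l := by
    intro ι _ u v h
    have step : ∀ i, u i * h * v i = ∑ l, ((e.repr (v i)) l : D) * u i * h * e l := by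
      intro i
      conv_lhs => rw [← Module.Basis.sum_repr e (v i)]
      rw [Finset.mul_sum]
      refine Finset.sum_congr rfl fun l _ => ?_
      have hsm : ((e.repr (v i)) l) • e l = ((e.repr (v i)) l : D) * e l := rfl
      calc u i * h * (((e.repr (v i)) l) • e l)
          = (u i * h * ((e.repr (v i)) l : D)) * e l := by
            rw [hsm, mul_assoc, mul_assoc, mul_assoc]
        _ = (((e.repr (v i)) l : D) * (u i * h)) * e l := by
            rw [central_comm (r := (e.repr (v i)) l) (u i * h)]
        _ = ((e.repr (v i)) l : D) * u i * h * e l := by rw [← mul_assoc]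
    calc ∑ i, u i * h * v i = ∑ i, ∑ l, ((e.repr (v i)) l : D) * u i * h * e l :=
          Finset.sum_congr rfl fun i _ => step i
      _ = ∑ l, ∑ i, ((e.repr (v i)) l : D) * u i * h * e l := Finset.sum_comm
      _ = ∑ l, (∑ i, ((e.repr (v i)) l : D) * u i) * h * e l := by
          refine Finset.sum_congr rfl fun l _ => ?_
          rw [Finset.sum_mul, Finset.sum_mul]
  have expandR : ∀ {ι : Type} [Fintype ι] (u v : ι → D),
      ∑ i, φ (u i) * x * φ (v i)
        = ∑ l, φ (∑ i, ((e.repr (v i)) l : D) * u i) * x * φ (e l) := by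
    intro ι _ u v
    have step : ∀ i, φ (u i) * x * φ (v i)
        = ∑ l, φ (((e.repr (v i)) l : D) * u i) * x * φ (e l) := by
      intro i
      conv_lhs => rw [← Module.Basis.sum_repr e (v i)]
      rw [map_sum, Finset.mul_sum]
      refine Finset.sum_congr rfl fun l _ => ?_
      have h1 : ((e.repr (v i)) l) • e l = ((e.repr (v i)) l : D) * e l := rfl
      have h2 := hz _ (e.repr (v i) l).2
      rw [h1, map_mul, map_mul]
      have h3 : φ (u i) * x * (φ ((e.repr (v i)) l : D) * φ (e l))
          = (φ ((e.repr (v i)) l : D) * (φ (u i) * x)) * φ (e l) := by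
        rw [Subring.mem_center_iff] at h2
        rw [← mul_assoc, ← h2 (φ (u i) * x)]
      rw [h3]
      simp only [mul_assoc]
    calc ∑ i, φ (u i) * x * φ (v i)
        = ∑ i, ∑ l, φ (((e.repr (v i)) l : D) * u i) * x * φ (e l) :=
          Finset.sum_congr rfl fun i _ => step i
      _ = ∑ l, ∑ i, φ (((e.repr (v i)) l : D) * u i) * x * φ (e l) := Finset.sum_comm
      _ = ∑ l, φ (∑ i, ((e.repr (v i)) l : D) * u i) * x * φ (e l) := by
          refine Finset.sum_congr rfl fun l _ => ?_
          rw [map_sum, Finset.sum_mul, Finset.sum_mul]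
  -- the two coefficient families agree
  have hA : ∀ l, (∑ i, ((e.repr (b i)) l : D) * a i) = ∑ i, ((e.repr (b' i)) l : D) * a' i := by
    have key : ∀ h : D, ∑ l, ((∑ i, ((e.repr (b i)) l : D) * a i)
        - (∑ i, ((e.repr (b' i)) l : D) * a' i)) * h * e l = 0 := by
      intro h
      have h1 : (∑ l, (∑ i, ((e.repr (b i)) l : D) * a i) * h * e l)
          = ∑ l, (∑ i, ((e.repr (b' i)) l : D) * a' i) * h * e l := by
        rw [← expand a b h, ← expand a' b' h]; exact hop h
      rw [← sub_eq_zero] at h1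
      rw [← h1, ← Finset.sum_sub_distrib]
      exact Finset.sum_congr rfl fun l _ => by rw [sub_mul, sub_mul]
    intro l
    have := lemK e.linearIndependent Finset.univ _ key l (Finset.mem_univ l)
    exact sub_eq_zero.mp this
  exact (expandR a b).trans ((Finset.sum_congr rfl fun l _ => by
    rw [hA l]).trans (expandR a' b').symm)

end LemmaT


set_option maxHeartbeats 2000000
section LemmaT
variable {D R : Type*} [DivisionRing D] [Ring R]

/-- **Decomposition lemma**: if `D` is a division ring that is finite-dimensional over its
center, and `φ : D →+* R` maps the center of `D` into the center of `R`, then every element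
of `R` is a sum of products `φ(d) * c` with `c` centralizing the image of `φ`. -/
lemma lemT [Module.Finite (Subring.center D) D] (φ : D →+* R)
    (hz : ∀ s : D, s ∈ Subring.center D → φ s ∈ Subring.center R) (x : R) :
    ∃ (n : ℕ) (dd : Fin n → D) (c : Fin n → R),
      (∀ j, c j ∈ Subring.centralizer (Set.range ⇑φ)) ∧ x = ∑ j, φ (dd j) * c j := by
  set z := Subring.center D
  set n := Module.finrank z D with hn
  let e : Module.Basis (Fin n) z D := Module.finBasis z D
  -- the operator algebra: coordinate operators exist
  have hcoord : ∀ j : Fin n, ∃ cj : Fin n → D,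
      ∀ h : D, ∑ i, cj i * h * e i = ((e.repr h) j : D) := by
    let Θ : (Fin n → D) →ₗ[z] (D →ₗ[z] D) :=
      { toFun := fun c =>
          { toFun := fun h => ∑ i, c i * h * e i
            map_add' := fun h1 h2 => by
              rw [← Finset.sum_add_distrib]
              exact Finset.sum_congr rfl fun i _ => by noncomm_ring
            map_smul' := fun r h => by
              simp only [RingHom.id_apply]
              have : r • ∑ i, c i * h * e i = (r : D) * ∑ i, c i * h * e i := rfl
              rw [this, Finset.mul_sum]
              refine Finset.sum_congr rfl fun i _ => ?_
              have hsm : r • h = (r : D) * h := rfl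
              rw [hsm, ← mul_assoc, ← central_comm (r := r) (c i)]
              simp only [mul_assoc] }
        map_add' := fun c1 c2 => by
          ext h
          show ∑ i, (c1 i + c2 i) * h * e i = _
          have : ∀ i, (c1 i + c2 i) * h * e i = c1 i * h * e i + c2 i * h * e i := by
            intro i; noncomm_ring
          rw [Finset.sum_congr rfl fun i _ => this i, Finset.sum_add_distrib]
          rfl
        map_smul' := fun r c => by
          ext h
          show ∑ i, (r • c) i * h * e i = r • ∑ i, c i * h * e i
          have hr : r • ∑ i, c i * h * e i = (r : D) * ∑ i, c i * h * e i := rfl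
          rw [hr, Finset.mul_sum]
          refine Finset.sum_congr rfl fun i _ => ?_
          have : (r • c) i = (r : D) * c i := rfl
          rw [this]
          simp only [mul_assoc] }
    have hΘ : ∀ (c : Fin n → D) (h : D), Θ c h = ∑ i, c i * h * e i := fun _ _ => rfl
    have hinj : Function.Injective Θ := by
      rw [injective_iff_map_eq_zero]
      intro c hc
      funext i
      refine lemK e.linearIndependent Finset.univ c (fun h => ?_) i (Finset.mem_univ i)
      have : Θ c h = 0 := by rw [hc]; rfl
      rwa [hΘ] at this
    have hfr : Module.finrank z (Fin n → D) = Module.finrank z (D →ₗ[z] D) := by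
      rw [Module.finrank_pi_fintype, Module.finrank_linearMap]
      simp [← hn, Finset.sum_const, Fintype.card_fin, smul_eq_mul]
    have hsurj : Function.Surjective Θ :=
      (LinearMap.injective_iff_surjective_of_finrank_eq_finrank hfr).mp hinj
    intro j
    let P : D →ₗ[z] D :=
      { toFun := fun h => ((e.repr h) j : D)
        map_add' := fun h1 h2 => by simp
        map_smul' := fun r h => by
          simp only [map_smul, RingHom.id_apply]
          have h1 : ((r • e.repr h) j) = r * ((e.repr h) j) := rfl
          rw [h1]
          push_cast
          rfl }
    obtain ⟨cj, hcj⟩ := hsurj P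
    exact ⟨cj, fun h => by rw [← hΘ cj h, hcj]; rfl⟩
  choose cf hcf using hcoord
  -- the centralizer components
  refine ⟨n, ⇑e, fun j => ∑ i, φ (cf j i) * x * φ (e i), fun j => ?_, ?_⟩
  · -- centrality
    rw [Subring.mem_centralizer_iff]
    rintro _ ⟨w, rfl⟩
    have hop : ∀ h : D, ∑ i, (w * cf j i) * h * e i = ∑ i, cf j i * h * (e i * w) := by
      intro h
      have h1 : ∑ i, (w * cf j i) * h * e i = w * ∑ i, cf j i * h * e i := by
        rw [Finset.mul_sum]; exact Finset.sum_congr rfl fun i _ => by simp only [mul_assoc]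
      have h2 : ∑ i, cf j i * h * (e i * w) = (∑ i, cf j i * h * e i) * w := by
        rw [Finset.sum_mul]; exact Finset.sum_congr rfl fun i _ => by simp only [mul_assoc]
      rw [h1, h2, hcf j h, central_comm]
    have := lemT_transfer φ hz (fun i => w * cf j i) (⇑e) (cf j) (fun i => e i * w) hop x
    calc φ w * ∑ i, φ (cf j i) * x * φ (e i) = ∑ i, φ (w * cf j i) * x * φ (e i) := by
          rw [Finset.mul_sum]
          exact Finset.sum_congr rfl fun i _ => by rw [map_mul]; simp only [mul_assoc]
      _ = ∑ i, φ (cf j i) * x * φ (e i * w) := this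
      _ = (∑ i, φ (cf j i) * x * φ (e i)) * φ w := by
          rw [Finset.sum_mul]
          exact Finset.sum_congr rfl fun i _ => by rw [map_mul]; simp only [mul_assoc]
  · -- the sum identity
    have hop : ∀ h : D, ∑ p : Fin n × Fin n, (e p.1 * cf p.1 p.2) * h * e p.2
        = ∑ _ : PUnit.{1}, (1 : D) * h * 1 := by
      intro h
      rw [Fintype.sum_prod_type]
      calc ∑ j, ∑ i, (e j * cf j i) * h * e i
          = ∑ j, e j * ∑ i, cf j i * h * e i := by
            refine Finset.sum_congr rfl fun j _ => ?_
            rw [Finset.mul_sum]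
            exact Finset.sum_congr rfl fun i _ => by simp only [mul_assoc]
        _ = ∑ j, ((e.repr h) j : D) * e j := by
            refine Finset.sum_congr rfl fun j _ => ?_
            rw [hcf j h, ← central_comm]
        _ = h := by
            conv_rhs => rw [← Module.Basis.sum_repr e h]
            rfl
        _ = ∑ _ : PUnit.{1}, (1 : D) * h * 1 := by simp
    have := lemT_transfer φ hz (fun p : Fin n × Fin n => e p.1 * cf p.1 p.2)
      (fun p => e p.2) (fun _ : PUnit.{1} => 1) (fun _ => 1) hop x
    rw [Fintype.sum_prod_type] at this
    calc x = ∑ _ : PUnit.{1}, φ 1 * x * φ 1 := by simp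
      _ = ∑ j, ∑ i, φ (e j * cf j i) * x * φ (e i) := this.symm
      _ = ∑ j, φ (e j) * ∑ i, φ (cf j i) * x * φ (e i) := by
          refine Finset.sum_congr rfl fun j _ => ?_
          rw [Finset.mul_sum]
          exact Finset.sum_congr rfl fun i _ => by rw [map_mul]; simp only [mul_assoc]

end LemmaT


set_option maxHeartbeats 1000000

/-- **Artin's lemma** for division rings. -/
lemma artinLemma {H F : Type*} [DivisionRing H] [DivisionRing F] (φ : H →+* F)
    (hfix : ∀ m : F, (∀ f : RingAut F, (∀ x : H, f (φ x) = φ x) → f m = m) →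
      ∃ x : H, φ x = m)
    (hfin : Finite (φ.fixingSubgroup)) :
    letI : Module H F := Module.compHom F φ
    Module.Finite H F := by
  letI : Module H F := Module.compHom F φ
  have hsmul : ∀ (h : H) (v : F), h • v = φ h * v := fun _ _ => rfl
  classical
  cases nonempty_fintype (φ.fixingSubgroup)
  set Γ := φ.fixingSubgroup with hΓ
  set N := Fintype.card Γ with hN
  have key : ∀ s : Finset F, (LinearIndependent H fun i : s => (i : F)) → s.card ≤ N := by
    intro s hli
    by_contra hcard
    push_neg at hcard
    let Φ : (s → F) →ₗ[F] (Γ → F) :=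
      { toFun := fun c γ => ∑ i, c i * (γ : RingAut F) (i : F)
        map_add' := fun c1 c2 => by
          funext γ
          show (∑ i, (c1 i + c2 i) * (γ : RingAut F) (i : F))
              = (∑ i, c1 i * (γ : RingAut F) (i : F)) + ∑ i, c2 i * (γ : RingAut F) (i : F)
          rw [← Finset.sum_add_distrib]
          exact Finset.sum_congr rfl fun i _ => add_mul _ _ _
        map_smul' := fun a c => by
          funext γ
          show (∑ i, (a * c i) * (γ : RingAut F) (i : F))
              = a * ∑ i, c i * (γ : RingAut F) (i : F)
          rw [Finset.mul_sum]
          exact Finset.sum_congr rfl fun i _ => mul_assoc _ _ _ }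
    have hΦ : ∀ (c : s → F) (γ : Γ), Φ c γ = ∑ i, c i * (γ : RingAut F) (i : F) :=
      fun _ _ => rfl
    have hker : ∃ c : s → F, c ≠ 0 ∧ Φ c = 0 := by
      by_contra hc
      push_neg at hc
      have hinj : Function.Injective Φ := by
        rw [injective_iff_map_eq_zero]
        intro c h0
        by_contra hne
        exact (hc c hne) h0
      have := LinearMap.finrank_le_finrank_of_injective hinj
      rw [Module.finrank_pi, Module.finrank_pi] at this
      simp only [Fintype.card_coe] at this
      omega
    obtain ⟨c0, hc0ne, hc0⟩ := hker
    let P : ℕ → Prop := fun m => ∃ c : s → F, c ≠ 0 ∧ Φ c = 0 ∧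
      (Finset.univ.filter fun i => c i ≠ 0).card = m
    have hPex : ∃ m, P m := ⟨_, c0, hc0ne, hc0, rfl⟩
    obtain ⟨c, hcne, hc, hccard⟩ := Nat.find_spec hPex
    have hmin : ∀ c' : s → F, c' ≠ 0 → Φ c' = 0 →
        Nat.find hPex ≤ (Finset.univ.filter fun i => c' i ≠ 0).card :=
      fun c' h1 h2 => Nat.find_min' hPex ⟨c', h1, h2, rfl⟩
    obtain ⟨j, hj⟩ : ∃ j, c j ≠ 0 := by
      by_contra hno; push_neg at hno; exact hcne (funext fun i => hno i)
    set b : s → F := (c j)⁻¹ • c with hbdef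
    have hbj : b j = 1 := inv_mul_cancel₀ hj
    have hb : Φ b = 0 := by rw [hbdef, map_smul, hc, smul_zero]
    have hbsupp : ∀ i, b i ≠ 0 ↔ c i ≠ 0 := by
      intro i
      have hbi : b i = (c j)⁻¹ * c i := rfl
      constructor
      · intro h h0; exact h (by rw [hbi, h0, mul_zero])
      · intro h h0
        have : c i = c j * b i := by
          rw [hbi, ← mul_assoc, mul_inv_cancel₀ hj, one_mul]
        exact h (by rw [this, h0, mul_zero])
    -- b is fixed by the whole group
    have hfixb : ∀ (g : Γ) (i : s), (g : RingAut F) (b i) = b i := by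
      intro g
      set d : s → F := fun i => b i - (g : RingAut F) (b i) with hd
      have hgker : Φ (fun i => (g : RingAut F) (b i)) = 0 := by
        funext γ
        rw [hΦ]
        simp only [Pi.zero_apply]
        have h0 : Φ b (g⁻¹ * γ) = 0 := by rw [hb]; rfl
        rw [hΦ] at h0
        have := congrArg (g : RingAut F) h0
        rw [map_zero, map_sum] at this
        rw [← this]
        refine Finset.sum_congr rfl fun i _ => ?_
        rw [map_mul]
        congr 1
        show (γ : RingAut F) (i : F) = (g : RingAut F) (((g⁻¹ * γ : Γ) : RingAut F) (i : F))
        have hco : ((g⁻¹ * γ : Γ) : RingAut F) = (g : RingAut F)⁻¹ * (γ : RingAut F) := rfl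
        rw [hco]
        show (γ : RingAut F) (i : F)
            = (g : RingAut F) (((g : RingAut F)⁻¹) ((γ : RingAut F) (i : F)))
        exact ((g : RingAut F).apply_symm_apply _).symm
      have hdker : Φ d = 0 := by
        have : d = b - fun i => (g : RingAut F) (b i) := rfl
        rw [this, map_sub, hb, hgker, sub_zero]
      by_cases hdz : d = 0
      · intro i
        have := congrFun hdz i
        simp only [hd, Pi.zero_apply, sub_eq_zero] at this
        exact this.symm
      · exfalso
        have hdj : d j = 0 := by
          simp only [hd, hbj, map_one, sub_self]
        have hsub : (Finset.univ.filter fun i => d i ≠ 0)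
            ⊆ (Finset.univ.filter fun i => c i ≠ 0).erase j := by
          intro i hi
          simp only [Finset.mem_filter, Finset.mem_univ, true_and] at hi
          rw [Finset.mem_erase]
          constructor
          · rintro rfl; exact hi hdj
          · simp only [Finset.mem_filter, Finset.mem_univ, true_and]
            rw [← hbsupp]
            intro hb0
            apply hi
            simp only [hd, hb0, map_zero, sub_zero]
        have h1 := hmin d hdz hdker
        have h2 := Finset.card_le_card hsub
        have h3 : ((Finset.univ.filter fun i => c i ≠ 0).erase j).card
            = Nat.find hPex - 1 := by
          rw [Finset.card_erase_of_mem, hccard]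
          simp only [Finset.mem_filter, Finset.mem_univ, true_and]
          exact hj
        have h4 : 1 ≤ Nat.find hPex := by
          rw [← hccard]
          refine Finset.card_pos.mpr ⟨j, ?_⟩
          simp only [Finset.mem_filter, Finset.mem_univ, true_and]
          exact hj
        omega
    -- hence b has values in the image of φ
    have hbim : ∀ i, ∃ x : H, φ x = b i := by
      intro i
      refine hfix (b i) fun f hf => ?_
      exact hfixb ⟨f, hf⟩ i
    choose xb hxb using hbim
    -- contradiction with linear independence
    have hsum : ∑ i, xb i • (i : F) = 0 := by
      have h0 : Φ b 1 = 0 := by rw [hb]; rfl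
      rw [hΦ] at h0
      rw [← h0]
      refine Finset.sum_congr rfl fun i _ => ?_
      rw [hsmul, hxb]
      rfl
    have := linearIndependent_iff'.mp hli Finset.univ xb hsum j (Finset.mem_univ j)
    rw [← hxb j, this, map_zero] at hbj
    exact zero_ne_one hbj
  have hrank : Module.rank H F ≤ N := rank_le key
  rw [← Module.rank_lt_aleph0_iff]
  exact lt_of_le_of_lt hrank (Cardinal.nat_lt_aleph0 N)


set_option maxHeartbeats 1000000

/-- **Lemma M**: the centralizer of the image of `H` equals the center of `F`. -/
lemma lemM {H F : Type*} [DivisionRing H] [DivisionRing F]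
    [Module.Finite (Subring.center H) H]
    (φ : H →+* F) (hφ : Function.Injective φ)
    (hGal : φ.IsArtinGalois) (hfin : Finite φ.fixingSubgroup) :
    Subring.centralizer (Set.range ⇑φ) = Subring.center F := by
  classical
  have h1 : Subring.center F ≤ Subring.centralizer (Set.range ⇑φ) := by
    intro u hu
    rw [Subring.mem_centralizer_iff]
    intro g _
    exact Subring.mem_center_iff.mp hu g
  refine le_antisymm ?_ h1
  intro c hc
  by_contra hcZ
  -- conjugation by nonzero centralizer elements fixes the image of φ
  have hconj : ∀ (u : F) (hu : u ≠ 0), u ∈ Subring.centralizer (Set.range ⇑φ) →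
      conjAut u hu ∈ φ.fixingSubgroup := by
    intro u hu humem x
    rw [conjAut_apply]
    have := Subring.mem_centralizer_iff.mp humem (φ x) ⟨x, rfl⟩
    rw [← this, mul_assoc, mul_inv_cancel₀ hu, mul_one]
  -- two conjugations agree iff the elements differ by a central factor
  have hkey : ∀ u v : F, u ≠ 0 → v ≠ 0 → (∀ w, u * w * u⁻¹ = v * w * v⁻¹) →
      v⁻¹ * u ∈ Subring.center F := by
    intro u v hu hv hw
    rw [Subring.mem_center_iff]
    intro w
    have h3 := congrArg (fun z => v⁻¹ * z * u) (hw w)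
    simp only [mul_assoc] at h3
    rw [inv_mul_cancel₀ hu, mul_one, inv_mul_cancel_left₀ hv] at h3
    rw [← h3]
    exact (mul_assoc v⁻¹ u w).symm
  -- step 1 : the center of F is finite
  have hcne : ∀ t : Subring.center F, c + (t : F) ≠ 0 := by
    intro t h0
    apply hcZ
    have : c = -(t : F) := eq_neg_of_add_eq_zero_left h0
    rw [this]
    exact Subring.neg_mem _ t.2
  haveI hZFfin : Finite (Subring.center F) := by
    have hinj : Function.Injective (fun t : Subring.center F =>
        (⟨conjAut (c + (t : F)) (hcne t), hconj _ (hcne t)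
          (Subring.add_mem _ hc (h1 t.2))⟩ : φ.fixingSubgroup)) := by
      intro t s hts
      have heq : ∀ w, (c + (t : F)) * w * (c + (t : F))⁻¹
          = (c + (s : F)) * w * (c + (s : F))⁻¹ := by
        intro w
        have := congrArg Subtype.val hts
        have h2 := congrArg (fun (ρ : RingAut F) => ρ w) this
        simpa only [conjAut_apply] using h2
      have hcent := hkey _ _ (hcne t) (hcne s) heq
      set w0 : F := (c + (s : F))⁻¹ * (c + (t : F)) with hw0
      have hfact : c + (t : F) = (c + (s : F)) * w0 := by
        rw [hw0, mul_inv_cancel_left₀ (hcne s)]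
      by_cases hw1 : w0 = 1
      · rw [hw1, mul_one] at hfact
        exact Subtype.ext (add_left_cancel hfact)
      · exfalso
        apply hcZ
        have hd : c * (1 - w0) = (s : F) * w0 - (t : F) := by
          have h5 : c + (t:F) = c * w0 + (s:F) * w0 := by rw [hfact, add_mul]
          rw [mul_sub, mul_one, sub_eq_sub_iff_add_eq_add, h5]
          abel
        have hrhs : (s : F) * w0 - (t : F) ∈ Subring.center F :=
          Subring.sub_mem _ (Subring.mul_mem _ s.2 hcent) t.2
        have h1w : (1 : F) - w0 ∈ Subring.center F :=
          Subring.sub_mem _ (Subring.one_mem _) hcent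
        have h1wne : (1 : F) - w0 ≠ 0 := by
          intro h0
          exact hw1 (sub_eq_zero.mp h0).symm
        have hinv : ((1 : F) - w0)⁻¹ ∈ Subring.center F := Set.inv_mem_center h1w
        have : c = ((s : F) * w0 - (t : F)) * ((1:F) - w0)⁻¹ := by
          rw [← hd, mul_assoc, mul_inv_cancel₀ h1wne, mul_one]
        rw [this]
        exact Subring.mul_mem _ hrhs hinv
    exact Finite.of_injective _ hinj
  -- step 2 : the centralizer is finite
  haveI hCfin : Finite (Subring.centralizer (Set.range ⇑φ)) := by
    have hsub : (Subring.centralizer (Set.range ⇑φ) : Set F) ⊆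
        {0} ∪ ⋃ γ : φ.fixingSubgroup,
          {u : F | u ∈ Subring.centralizer (Set.range ⇑φ) ∧ u ≠ 0 ∧
            ∀ w, u * w * u⁻¹ = (γ : RingAut F) w} := by
      intro u hu
      by_cases hu0 : u = 0
      · exact Or.inl hu0
      · refine Or.inr (Set.mem_iUnion.mpr ⟨⟨conjAut u hu0, hconj u hu0 hu⟩, hu, hu0, ?_⟩)
        intro w
        exact (conjAut_apply u hu0 w).symm
    have hfinU : ∀ γ : φ.fixingSubgroup,
        ({u : F | u ∈ Subring.centralizer (Set.range ⇑φ) ∧ u ≠ 0 ∧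
          ∀ w, u * w * u⁻¹ = (γ : RingAut F) w}).Finite := by
      intro γ
      set S := {u : F | u ∈ Subring.centralizer (Set.range ⇑φ) ∧ u ≠ 0 ∧
          ∀ w, u * w * u⁻¹ = (γ : RingAut F) w} with hS
      rcases Set.eq_empty_or_nonempty S with hemp | ⟨u0, hu0⟩
      · rw [hemp]; exact Set.finite_empty
      · have : S ⊆ (fun z : F => u0 * z) '' (Subring.center F : Set F) := by
          intro u hu
          refine ⟨u0⁻¹ * u, ?_, ?_⟩
          · have := hkey u u0 hu.2.1 hu0.2.1 (fun w => (hu.2.2 w).trans (hu0.2.2 w).symm)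
            exact this
          · show u0 * (u0⁻¹ * u) = u
            rw [mul_inv_cancel_left₀ hu0.2.1]
        exact Set.Finite.subset (Set.Finite.image _ (Subring.center F : Set F).toFinite) this
    have : ((Subring.centralizer (Set.range ⇑φ)) : Set F).Finite :=
      Set.Finite.subset ((Set.finite_singleton 0).union
        (Set.finite_iUnion hfinU)) hsub
    exact this.to_subtype
  -- step 3 : the center of H is finite
  haveI hZHfin : Finite (Subring.center H) := by
    have hinj2 : Function.Injective (fun t : Subring.center H =>
        (⟨φ (t : H), by
          rw [Subring.mem_centralizer_iff]
          rintro _ ⟨x, rfl⟩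
          rw [← map_mul, ← map_mul, Subring.mem_center_iff.mp t.2 x]⟩ :
          Subring.centralizer (Set.range ⇑φ))) := by
      intro t s hts
      exact Subtype.ext (hφ (congrArg Subtype.val hts))
    exact Finite.of_injective _ hinj2
  -- step 4 : H is finite
  haveI hHfin : Finite H := Module.finite_of_finite (Subring.center H)
  -- step 5 : F is finite-dimensional over H, hence finite
  letI : Module H F := Module.compHom F φ
  haveI hMF : Module.Finite H F := artinLemma φ hGal hfin
  haveI hFfin : Finite F := Module.finite_of_finite H
  -- step 6 : by Wedderburn's little theorem, F is commutative
  exact hcZ (Subring.mem_center_iff.mpr fun g => mul_comm g c)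


set_option maxHeartbeats 1000000

section Stab

variable {H L F : Type*} [DivisionRing H] [DivisionRing L] [DivisionRing F]
    [Module.Finite (Subring.center H) H]
    (ι : H →+* L) (κ : L →+* F)

/-- Stability: any automorphism of `F` fixing `H` pointwise maps `κ(L)` into itself. -/
lemma stabLemma (hι : Function.Injective ι) (hκ : Function.Injective κ)
    (hLH : ι.IsArtinGalois) (hFH : (κ.comp ι).IsArtinGalois)
    (hLfin : Finite ι.fixingSubgroup) (hFfin : Finite (κ.comp ι).fixingSubgroup)
    (f : RingAut F) (hf : ∀ x : H, f (κ (ι x)) = κ (ι x)) :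
    ∀ y : L, ∃ y' : L, f (κ y) = κ y' := by
  classical
  have hκι : Function.Injective ⇑(κ.comp ι) := by
    rw [RingHom.coe_comp]; exact hκ.comp hι
  have hCZ := lemM (κ.comp ι) hκι hFH hFfin
  have hrange : ∀ w : F, w ∈ Set.range ⇑(κ.comp ι) ↔ ∃ x : H, κ (ι x) = w := by
    intro w; constructor
    · rintro ⟨x, rfl⟩; exact ⟨x, rfl⟩
    · rintro ⟨x, rfl⟩; exact ⟨x, rfl⟩
  -- elements of κ(E_L) are central in F
  have hELK : ∀ t : L, t ∈ Subring.centralizer (Set.range ⇑ι) →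
      κ t ∈ Subring.center F := by
    intro t ht
    rw [← hCZ, Subring.mem_centralizer_iff]
    intro w hw
    obtain ⟨x, rfl⟩ := (hrange w).mp hw
    have h2 : ι x * t = t * ι x := Subring.mem_centralizer_iff.mp ht (ι x) ⟨x, rfl⟩
    show κ (ι x) * κ t = κ t * κ (ι x)
    rw [← map_mul, ← map_mul, h2]
  -- the image of the center of H is central in L
  have hzL : ∀ s : H, s ∈ Subring.center H → ι s ∈ Subring.center L := by
    intro s hs
    have h3 : κ (ι s) ∈ Subring.center F := by
      apply hELK
      rw [Subring.mem_centralizer_iff]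
      rintro _ ⟨x, rfl⟩
      rw [← map_mul, ← map_mul, Subring.mem_center_iff.mp hs x]
    rw [Subring.mem_center_iff]
    intro g
    apply hκ
    rw [map_mul, map_mul, Subring.mem_center_iff.mp h3 (κ g)]
  -- E_L is a commutative subring
  set EL : Subring L := Subring.centralizer (Set.range ⇑ι) with hEL
  have hELcomm : ∀ a b : L, a ∈ EL → b ∈ EL → a * b = b * a := by
    intro a b ha hb
    apply hκ
    rw [map_mul, map_mul, Subring.mem_center_iff.mp (hELK a ha) (κ b)]
  letI : CommRing EL :=
    { (inferInstance : Ring (↥EL)) with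
      mul_comm := fun a b => Subtype.ext (hELcomm a.1 b.1 a.2 b.2) }
  -- the Galois group of L/H acts on E_L
  haveI : Fintype ι.fixingSubgroup := Fintype.ofFinite _
  let gE : ι.fixingSubgroup → (EL →+* EL) := fun g =>
    { toFun := fun t => ⟨(g : RingAut L) t.1, by
        refine Subring.mem_centralizer_iff.mpr ?_
        rintro _ ⟨x, rfl⟩
        have h2 : ι x * t.1 = t.1 * ι x :=
          Subring.mem_centralizer_iff.mp t.2 (ι x) ⟨x, rfl⟩
        calc ι x * (g : RingAut L) t.1 = (g : RingAut L) (ι x * t.1) := by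
              rw [map_mul, g.2 x]
          _ = (g : RingAut L) (t.1 * ι x) := by rw [h2]
          _ = (g : RingAut L) t.1 * ι x := by rw [map_mul, g.2 x]⟩
      map_one' := Subtype.ext (map_one (g : RingAut L))
      map_mul' := fun a b => Subtype.ext (map_mul (g : RingAut L) a.1 b.1)
      map_zero' := Subtype.ext (map_zero (g : RingAut L))
      map_add' := fun a b => Subtype.ext (map_add (g : RingAut L) a.1 b.1) }
  have hgE : ∀ (g : ι.fixingSubgroup) (t : EL), (gE g t).1 = (g : RingAut L) t.1 :=
    fun _ _ => rfl
  -- the key claim for elements of E_L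
  have stabE : ∀ x : EL, ∃ t : EL, f (κ x.1) = κ t.1 := by
    intro x
    set O : Multiset EL := Multiset.map (fun g => gE g x) Finset.univ.val with hO
    set P : Polynomial EL := (O.map fun a => Polynomial.X - Polynomial.C a).prod with hP
    have hPx : P.eval x = 0 := by
      rw [hP, Polynomial.eval_multiset_prod]
      refine Multiset.prod_eq_zero ?_
      rw [Multiset.map_map, hO, Multiset.map_map]
      refine Multiset.mem_map.mpr ⟨1, Finset.mem_univ_val _, ?_⟩
      have h1 : gE 1 x = x := Subtype.ext rfl
      simp [h1]
    have hmap : ∀ g : ι.fixingSubgroup, P.map (gE g) = P := by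
      intro g
      have hOinv : Multiset.map (gE g) O = O := by
        rw [hO, Multiset.map_map]
        have h4 : ∀ g' : ι.fixingSubgroup, (gE g ∘ fun g' => gE g' x) g'
            = ((fun gg => gE gg x) ∘ (fun g' => g * g')) g' := by
          intro g'; exact Subtype.ext rfl
        rw [Multiset.map_congr rfl fun g' _ => h4 g', ← Multiset.map_map]
        congr 1
        calc Multiset.map (fun g' => g * g') Finset.univ.val
            = (Finset.univ.map (Equiv.mulLeft g).toEmbedding).val := rfl
          _ = Finset.univ.val := by rw [Finset.map_univ_equiv]
      calc P.map (gE g)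
          = ((Multiset.map (⇑(gE g)) O).map fun a => Polynomial.X - Polynomial.C a).prod := by
            rw [hP, Polynomial.map_multiset_prod]
            simp only [Multiset.map_map]
            congr 1
            exact Multiset.map_congr rfl fun a _ => by simp [Polynomial.map_sub]
        _ = P := by rw [hOinv, hP]
    -- coefficients of P lie in the image of H
    have hcoeffs : ∀ i : ℕ, ∃ hh : H, ι hh = (P.coeff i).1 := by
      intro i
      refine hLH _ (fun fL hfL => ?_)
      have hg : fL ∈ ι.fixingSubgroup := hfL
      have h8 := hmap ⟨fL, hg⟩
      have h9 := congrArg (fun q => Polynomial.coeff q i) h8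
      simp only [Polynomial.coeff_map] at h9
      exact congrArg Subtype.val h9
    -- push everything into the center of F
    set K := Subring.center F
    let ψ : EL →+* K :=
      { toFun := fun t => ⟨κ t.1, hELK t.1 t.2⟩
        map_one' := Subtype.ext (map_one κ)
        map_mul' := fun a b => Subtype.ext (map_mul κ a.1 b.1)
        map_zero' := Subtype.ext (map_zero κ)
        map_add' := fun a b => Subtype.ext (map_add κ a.1 b.1) }
    have hcentf : ∀ t : K, f t.1 ∈ Subring.center F := by
      intro t
      rw [Subring.mem_center_iff]
      intro g
      calc g * f t.1 = f (f.symm g * t.1) := by rw [map_mul, RingEquiv.apply_symm_apply]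
        _ = f (t.1 * f.symm g) := by rw [Subring.mem_center_iff.mp t.2 (f.symm g)]
        _ = f t.1 * g := by rw [map_mul, RingEquiv.apply_symm_apply]
    let f₀ : K →+* K :=
      { toFun := fun t => ⟨f t.1, hcentf t⟩
        map_one' := Subtype.ext (map_one f)
        map_mul' := fun a b => Subtype.ext (map_mul f a.1 b.1)
        map_zero' := Subtype.ext (map_zero f)
        map_add' := fun a b => Subtype.ext (map_add f a.1 b.1) }
    set Q : Polynomial K := P.map ψ with hQ
    have hQx : Q.eval (ψ x) = 0 := by
      rw [hQ, Polynomial.eval_map, Polynomial.eval₂_hom, hPx, map_zero]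
    have hQf : Q.map f₀ = Q := by
      ext i
      rw [Polynomial.coeff_map]
      rw [hQ, Polynomial.coeff_map]
      obtain ⟨hh, hhh⟩ := hcoeffs i
      show f (κ (P.coeff i).1) = κ (P.coeff i).1
      rw [← hhh]
      exact hf hh
    have hQfx : Q.eval (f₀ (ψ x)) = 0 := by
      have h10 : f₀ (Q.eval (ψ x)) = 0 := by rw [hQx, map_zero]
      calc Q.eval (f₀ (ψ x)) = (Q.map f₀).eval (f₀ (ψ x)) := by rw [hQf]
        _ = f₀ (Q.eval (ψ x)) := by rw [Polynomial.eval_map, Polynomial.eval₂_hom]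
        _ = 0 := h10
    -- factor Q and find the root among the orbit
    have hQfactor : Q = ((Multiset.map (⇑ψ) O).map fun a => Polynomial.X - Polynomial.C a).prod := by
      rw [hQ, hP, Polynomial.map_multiset_prod]
      simp only [Multiset.map_map]
      congr 1
      exact Multiset.map_congr rfl fun a _ => by simp [Polynomial.map_sub]
    have h12 : Multiset.map (fun a => f₀ (ψ x) - ψ a) O
        = Multiset.map (Polynomial.eval (f₀ (ψ x)))
            ((Multiset.map (⇑ψ) O).map fun a => Polynomial.X - Polynomial.C a) := by
      simp only [Multiset.map_map]
      exact Multiset.map_congr rfl fun a _ => by simp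
    have h13 : (Multiset.map (fun a => f₀ (ψ x) - ψ a) O).prod = 0 := by
      rw [h12, ← Polynomial.eval_multiset_prod, ← hQfactor, hQfx]
    obtain ⟨a, hamem, haeq⟩ := Multiset.mem_map.mp (Multiset.prod_eq_zero_iff.mp h13)
    exact ⟨a, congrArg Subtype.val (sub_eq_zero.mp haeq)⟩
  -- now decompose an arbitrary element of L
  intro y
  obtain ⟨n, dd, cc, hcc, hdecomp⟩ := lemT ι hzL y
  have hterm : ∀ j : Fin n, ∃ t : EL, f (κ (cc j)) = κ t.1 := fun j => stabE ⟨cc j, hcc j⟩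
  choose tt htt using hterm
  refine ⟨∑ j, ι (dd j) * (tt j).1, ?_⟩
  rw [hdecomp, map_sum, map_sum, map_sum]
  refine Finset.sum_congr rfl fun j _ => ?_
  rw [map_mul, map_mul, map_mul, htt j, hf (dd j)]

end Stab


/-- Let `H` be a division ring of finite dimension over its center, and let `H ⊆ L ⊆ F` be
division rings (along injective ring homomorphisms `ι : H → L` and `κ : L → F`) such that both
`L/H` and `F/H` are Galois in the sense of Artin with finite Galois groups. Then the restriction
map `Gal(F/H) → Gal(L/H)` is well-defined: every automorphism of `F` fixing `H` pointwise
restricts to an automorphism of `L` fixing `H` pointwise. -/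
theorem restriction_well_defined
    (H L F : Type*) [DivisionRing H] [DivisionRing L] [DivisionRing F]
    [Module.Finite (Subring.center H) H]
    (ι : H →+* L) (κ : L →+* F)
    (hι : Function.Injective ι) (hκ : Function.Injective κ)
    (hLH : ι.IsArtinGalois) (hFH : (κ.comp ι).IsArtinGalois)
    (hLfin : Finite ι.fixingSubgroup) (hFfin : Finite (κ.comp ι).fixingSubgroup) :
    ∀ f : RingAut F, (∀ x : H, f (κ (ι x)) = κ (ι x)) →
      (f '' (Set.range κ) = Set.range κ) ∧
      ∃ g : RingAut L, (∀ x : H, g (ι x) = ι x) ∧ ∀ y : L, f (κ y) = κ (g y) := by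
  intro f hf
  classical
  have hfsymm : ∀ x : H, f.symm (κ (ι x)) = κ (ι x) := by
    intro x
    conv_lhs => rw [← hf x]
    exact f.symm_apply_apply _
  have hstab := stabLemma ι κ hι hκ hLH hFH hLfin hFfin f hf
  have hstab' := stabLemma ι κ hι hκ hLH hFH hLfin hFfin f⁻¹ hfsymm
  have hg : ∀ y : L, f (κ y) = κ (Classical.choose (hstab y)) :=
    fun y => Classical.choose_spec (hstab y)
  have hg' : ∀ y : L, f.symm (κ y) = κ (Classical.choose (hstab' y)) :=
    fun y => Classical.choose_spec (hstab' y)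
  set u : L → L := fun y => Classical.choose (hstab y) with hu
  set v : L → L := fun y => Classical.choose (hstab' y) with hv
  have huv : ∀ y, v (u y) = y := by
    intro y
    apply hκ
    rw [← hg' (u y), ← hg y, RingEquiv.symm_apply_apply]
  have hvu : ∀ y, u (v y) = y := by
    intro y
    apply hκ
    rw [← hg (v y), ← hg' y, RingEquiv.apply_symm_apply]
  let g : RingAut L :=
    { toFun := u
      invFun := v
      left_inv := huv
      right_inv := hvu
      map_add' := fun y z => by
        apply hκ
        rw [← hg (y + z), map_add, map_add, map_add, hg y, hg z]
      map_mul' := fun y z => by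
        apply hκ
        rw [← hg (y * z), map_mul, map_mul, map_mul, hg y, hg z] }
  constructor
  · ext w
    constructor
    · rintro ⟨-, ⟨y, rfl⟩, rfl⟩
      exact ⟨u y, (hg y).symm⟩
    · rintro ⟨y, rfl⟩
      refine ⟨κ (v y), ⟨v y, rfl⟩, ?_⟩
      rw [← hg' y, RingEquiv.apply_symm_apply]
  · refine ⟨g, fun x => ?_, fun y => hg y⟩
    apply hκ
    show κ (u (ι x)) = κ (ι x)
    rw [← hg (ι x), hf x]
end

section
/- Let L be a finite field, K a subfield of L, and σ a ring automorphism of K of order d. If d is coprime to the degree [L : K], then there exists a unique ring automorphism τ of L such that τ has order d and τ extends σ (i.e., τ(x) = σ(x) for all x ∈ K). -/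
open Polynomial

section FrobAux

variable {E : Type*} [Field E] [Finite E]

instance RingAut.finite : Finite (RingAut E) :=
  Finite.of_injective (fun f => (f : E → E)) DFunLike.coe_injective

/-- The Frobenius automorphism of a finite field. -/
noncomputable def frobAut (E : Type*) [Field E] [Finite E] (p : ℕ) [Fact p.Prime]
    [CharP E p] : RingAut E :=
  haveI : ExpChar E p := ExpChar.prime Fact.out
  RingEquiv.ofBijective (frobenius E p) (Finite.injective_iff_bijective.mp (frobenius_inj E p))

variable (p : ℕ) [Fact p.Prime] [CharP E p]

lemma frobAut_apply (x : E) : frobAut E p x = x ^ p := rfl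

lemma frobAut_pow_apply (k : ℕ) (x : E) : (frobAut E p ^ k) x = x ^ p ^ k := by
  induction k generalizing x with
  | zero => rw [pow_zero, pow_zero, pow_one]; rfl
  | succ k ih =>
      have h1 : (frobAut E p ^ (k + 1)) x = (frobAut E p ^ k) (frobAut E p x) := by
        rw [pow_succ]; rfl
      rw [h1, frobAut_apply, ih, ← pow_mul, ← pow_succ']

lemma orderOf_frobAut {n : ℕ} (hn : Nat.card E = p ^ n) : orderOf (frobAut E p) = n := by
  haveI := Fintype.ofFinite E
  rw [Nat.card_eq_fintype_card] at hn
  have hp1 : 1 < p := (Fact.out : p.Prime).one_lt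
  have hn0 : n ≠ 0 := by
    rintro rfl
    rw [pow_zero] at hn
    exact Fintype.one_lt_card.ne' hn
  have hpow : frobAut E p ^ n = 1 := by
    ext x
    rw [frobAut_pow_apply, ← hn]
    simpa using FiniteField.pow_card x
  have hdvd : orderOf (frobAut E p) ∣ n := orderOf_dvd_of_pow_eq_one hpow
  set t := orderOf (frobAut E p) with ht
  have ht0 : t ≠ 0 := (orderOf_pos _).ne'
  have hroots : ∀ x : E, x ∈ (X ^ p ^ t - X : E[X]).roots := by
    intro x
    rw [mem_roots (FiniteField.X_pow_card_pow_sub_X_ne_zero E ht0 hp1)]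
    have hx : x ^ p ^ t = x := by
      have h1 := DFunLike.congr_fun (pow_orderOf_eq_one (frobAut E p)) x
      rw [frobAut_pow_apply] at h1
      simpa using h1
    simp [sub_eq_zero, hx]
  have hcardle : Fintype.card E ≤ p ^ t := by
    classical
    have hsub : (Finset.univ : Finset E) ⊆ (X ^ p ^ t - X : E[X]).roots.toFinset := by
      intro x _
      exact Multiset.mem_toFinset.mpr (hroots x)
    calc Fintype.card E = (Finset.univ : Finset E).card := rfl
      _ ≤ (X ^ p ^ t - X : E[X]).roots.toFinset.card := Finset.card_le_card hsub
      _ ≤ Multiset.card (X ^ p ^ t - X : E[X]).roots := Multiset.toFinset_card_le _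
      _ ≤ (X ^ p ^ t - X : E[X]).natDegree := Polynomial.card_roots' _
      _ = p ^ t := FiniteField.X_pow_card_pow_sub_X_natDegree_eq E ht0 hp1
  have hle : n ≤ t := by
    rw [← Nat.pow_le_pow_iff_right hp1, ← hn]
    exact hcardle
  exact Nat.le_antisymm (Nat.le_of_dvd (Nat.pos_of_ne_zero hn0) hdvd) hle

lemma card_ringAut {n : ℕ} (hn : Nat.card E = p ^ n) : Nat.card (RingAut E) = n := by
  letI : Algebra (ZMod p) E := ZMod.algebra E p
  haveI := Fintype.ofFinite E
  have hp1 : 1 < p := (Fact.out : p.Prime).one_lt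
  let e : (E ≃ₐ[ZMod p] E) ≃ RingAut E :=
    { toFun := fun f => f.toRingEquiv
      invFun := fun f => AlgEquiv.ofRingEquiv (f := f) (fun r => by
        have h1 : (f : E →+* E).comp (algebraMap (ZMod p) E) = algebraMap (ZMod p) E :=
          Subsingleton.elim _ _
        exact DFunLike.congr_fun h1 r)
      left_inv := fun f => by ext x; rfl
      right_inv := fun f => by ext x; rfl }
  have h2 : Nat.card (RingAut E) = Nat.card (E ≃ₐ[ZMod p] E) := (Nat.card_congr e).symm
  have h3 : Fintype.card E = p ^ Module.finrank (ZMod p) E := by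
    have := Module.card_eq_pow_finrank (K := ZMod p) (V := E)
    rwa [ZMod.card] at this
  have h4 : Module.finrank (ZMod p) E = n := by
    apply Nat.pow_right_injective (Fact.out : p.Prime).two_le
    show p ^ Module.finrank (ZMod p) E = p ^ n
    rw [← h3, ← Nat.card_eq_fintype_card, hn]
  rw [h2, IsGalois.card_aut_eq_finrank, h4]

lemma exists_frobAut_pow {n : ℕ} (hn : Nat.card E = p ^ n) (τ : RingAut E) :
    ∃ k : ℕ, frobAut E p ^ k = τ := by
  have h1 : Subgroup.zpowers (frobAut E p) = ⊤ := by
    apply Subgroup.eq_top_of_card_eq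
    rw [Nat.card_zpowers, orderOf_frobAut p hn, card_ringAut p hn]
  have h2 : τ ∈ Subgroup.zpowers (frobAut E p) := h1 ▸ Subgroup.mem_top τ
  rw [← mem_powers_iff_mem_zpowers] at h2
  exact (Submonoid.mem_powers_iff _ _).mp h2

end FrobAux

/-- Let `L` be a finite field, `K` a subfield of `L`, and `σ` an automorphism of `K` of
order `d`. If `d` is coprime to the degree `[L : K]`, then there is a unique automorphism
`τ` of `L` of order `d` extending `σ`. -/
theorem existsUnique_automorphism_extension_of_coprime
    (L : Type*) [Field L] [Finite L] (K : Subfield L)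
    (σ : RingAut K) (d : ℕ) (hd : orderOf σ = d)
    (h : Nat.Coprime d (Module.finrank K L)) :
    ∃! τ : RingAut L, orderOf τ = d ∧ ∀ x : K, τ x = (σ x : L) := by
  haveI := Fintype.ofFinite L
  haveI := Fintype.ofFinite K
  obtain ⟨p, hpC⟩ := CharP.exists L
  haveI := hpC
  haveI hp : Fact p.Prime := ⟨CharP.char_is_prime L p⟩
  haveI : CharP K p := K.subtype.charP Subtype.coe_injective p
  have hp1 : 1 < p := hp.out.one_lt
  -- cardinalities
  obtain ⟨n0, -, hnL⟩ := FiniteField.card L p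
  obtain ⟨m0, -, hmK⟩ := FiniteField.card K p
  set n : ℕ := (n0 : ℕ)
  set m : ℕ := (m0 : ℕ)
  have hnL' : Nat.card L = p ^ n := by rw [Nat.card_eq_fintype_card, hnL]
  have hmK' : Nat.card K = p ^ m := by rw [Nat.card_eq_fintype_card, hmK]
  set F : RingAut L := frobAut L p with hF
  set G : RingAut K := frobAut K p with hG
  have hFn : orderOf F = n := orderOf_frobAut p hnL'
  have hGm : orderOf G = m := orderOf_frobAut p hmK'
  set r : ℕ := Module.finrank K L with hr
  -- n = m * r
  have hnm : n = m * r := by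
    have h1 : Fintype.card L = Fintype.card K ^ r := Module.card_eq_pow_finrank
    rw [hnL, hmK, ← pow_mul] at h1
    exact Nat.pow_right_injective hp.out.two_le h1
  have hm0 : 0 < m := hGm ▸ orderOf_pos G
  have hd0 : 0 < d := hd ▸ orderOf_pos σ
  have hr0 : 0 < r := by
    have := Module.finrank_pos (R := K) (M := L)
    exact this
  -- σ is a power of the Frobenius of K
  obtain ⟨a, ha⟩ := exists_frobAut_pow p hmK' σ
  set c : ℕ := Nat.gcd m a with hc
  have hcd : c * d = m := by
    have h1 : orderOf (G ^ a) = m / c := by rw [orderOf_pow, hGm]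
    rw [ha, hd] at h1
    rw [h1]
    exact Nat.mul_div_cancel' (Nat.gcd_dvd_left m a)
  have hca : c ∣ a := Nat.gcd_dvd_right m a
  -- compatibility of the two Frobenii
  have hcompat : ∀ (j : ℕ) (x : K), (F ^ j) (x : L) = ((G ^ j) x : L) := by
    intro j x
    rw [frobAut_pow_apply, frobAut_pow_apply]
    push_cast
    ring
  have hext_iff : ∀ j : ℕ, (∀ x : K, (F ^ j) x = (σ x : L)) ↔ G ^ j = σ := by
    intro j
    constructor
    · intro hj
      ext x
      have h1 := hj x
      rw [hcompat j x] at h1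
      exact_mod_cast h1
    · intro hj x
      rw [hcompat j x, hj]
  -- key: F^j has order d automatically when it extends σ and (c*r) ∣ j
  have horder : ∀ j : ℕ, G ^ j = σ → c * r ∣ j → orderOf (F ^ j) = d := by
    intro j hj hdj
    apply Nat.dvd_antisymm
    · apply orderOf_dvd_of_pow_eq_one
      rw [← pow_mul]
      apply orderOf_dvd_iff_pow_eq_one.mp
      rw [hFn, hnm, ← hcd]
      obtain ⟨s, rfl⟩ := hdj
      exact ⟨s, by ring⟩
    · have h1 : (F ^ j) ^ orderOf (F ^ j) = 1 := pow_orderOf_eq_one _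
      rw [← pow_mul] at h1
      have h2 : n ∣ j * orderOf (F ^ j) := hFn ▸ orderOf_dvd_of_pow_eq_one h1
      have h3 : m ∣ j * orderOf (F ^ j) := dvd_trans ⟨r, hnm⟩ h2
      have h4 : G ^ (j * orderOf (F ^ j)) = 1 :=
        orderOf_dvd_iff_pow_eq_one.mp (hGm ▸ h3)
      rw [pow_mul, hj] at h4
      exact hd ▸ orderOf_dvd_of_pow_eq_one h4
  -- construct k by CRT
  have hgcd : Nat.gcd m (c * r) = c := by
    rw [← hcd, Nat.gcd_mul_left, h.gcd_eq_one, mul_one]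
  obtain ⟨k, hk1, hk2⟩ := Nat.chineseRemainder'
    (a := a) (b := 0) (n := m) (m := c * r)
    (by rw [hgcd]; exact (Nat.modEq_zero_iff_dvd).mpr hca)
  have hk2' : c * r ∣ k := (Nat.modEq_zero_iff_dvd).mp hk2
  have hGk : G ^ k = σ := by
    rw [← ha]
    rw [pow_eq_pow_iff_modEq, hGm]
    exact hk1
  refine ⟨F ^ k, ⟨horder k hGk hk2', (hext_iff k).mpr hGk⟩, ?_⟩
  -- uniqueness
  rintro τ' ⟨hτ'd, hτ'ext⟩
  obtain ⟨k', hk'⟩ := exists_frobAut_pow p hnL' τ'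
  subst hk'
  have hGk' : G ^ k' = σ := (hext_iff k').mp hτ'ext
  -- k' ≡ a mod m
  have hk'a : k' ≡ a [MOD m] := by
    rw [← hGm, ← pow_eq_pow_iff_modEq]
    rw [hGk', ha]
  -- c * r ∣ k'
  have hcrk' : c * r ∣ k' := by
    have h1 : orderOf (F ^ k') = n / Nat.gcd n k' := by rw [orderOf_pow, hFn]
    rw [hτ'd] at h1
    have hgdvd : Nat.gcd n k' ∣ n := Nat.gcd_dvd_left n k'
    have h2 : Nat.gcd n k' * d = n := by
      rw [h1]
      exact Nat.mul_div_cancel' hgdvd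
    have h3 : Nat.gcd n k' = c * r :=
      Nat.eq_of_mul_eq_mul_right hd0 (by rw [h2, hnm, ← hcd]; ring)
    exact h3 ▸ Nat.gcd_dvd_right n k'
  -- combine: k' ≡ k mod n
  have hmod : k' ≡ k [MOD n] := by
    have h1 : (m : ℤ) ∣ (k : ℤ) - (k' : ℤ) := by
      have := hk'a.trans hk1.symm
      exact (Nat.modEq_iff_dvd).mp this
    have h2 : ((c * r : ℕ) : ℤ) ∣ (k : ℤ) - (k' : ℤ) := by
      have hx : k' ≡ k [MOD c * r] := by
        calc k' ≡ 0 [MOD c * r] := (Nat.modEq_zero_iff_dvd).mpr hcrk'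
          _ ≡ k [MOD c * r] := ((Nat.modEq_zero_iff_dvd).mpr hk2').symm
      exact (Nat.modEq_iff_dvd).mp hx
    have hlcm : Nat.lcm m (c * r) = n := by
      rw [← hcd, Nat.lcm_mul_left, h.lcm_eq_mul, hnm, ← hcd]
      ring
    have h3 : ((Nat.lcm m (c * r) : ℕ) : ℤ) ∣ (k : ℤ) - (k' : ℤ) := by
      have h5 := Int.ofNat_dvd_left.mpr (Int.lcm_dvd (Int.dvd_natAbs.mpr h1) (Int.dvd_natAbs.mpr h2))
      have h6 : Int.lcm (m : ℤ) ((c * r : ℕ) : ℤ) = Nat.lcm m (c * r) := by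
        simp [Int.lcm, Int.natAbs_mul]
      rwa [h6] at h5
    rw [hlcm] at h3
    exact (Nat.modEq_iff_dvd).mpr h3
  rw [← hFn, ← pow_eq_pow_iff_modEq] at hmod
  exact hmod
end
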